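/- arXiv:1411.6966 — 4 statements merged into one kernel-verified Lean document; each statement's English description precedes it below -/
import Mathlib

section
/- For integers k ≥ 1 and r ≥ 2, the maximum number of edges in a subgraph of the complete r-partite graph K_r(k) (with k vertices in each part) containing no copy of K_r is exactly (C(r,2) - 1)·k². -/
open Finset

private lemma card_pairs_cond (k r : ℕ) (P : Fin r → Fin r → Prop)
    [∀ i j, Decidable (P i j)] :
    (Finset.univ.filter (fun p : (Fin r × Fin k) × (Fin r × Fin k) => P p.1.1 p.2.1)).card
      = (Finset.univ.filter (fun q : Fin r × Fin r => P q.1 q.2)).card * k ^ 2 := by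
  have : ((Finset.univ.filter (fun q : Fin r × Fin r => P q.1 q.2)) ×ˢ
      (Finset.univ : Finset (Fin k × Fin k))).card
      = (Finset.univ.filter (fun q : Fin r × Fin r => P q.1 q.2)).card * k ^ 2 := by
    rw [Finset.card_product]
    simp [sq]
  rw [← this]
  apply Finset.card_nbij' (fun p => ((p.1.1, p.2.1), (p.1.2, p.2.2)))
    (fun q => ((q.1.1, q.2.1), (q.1.2, q.2.2)))
  · intro p hp
    simp only [Finset.mem_coe, Finset.mem_filter, Finset.mem_univ, true_and] at hp ⊢
    simp [Finset.mem_product, hp]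
  · intro q hq
    simp only [Finset.mem_coe, Finset.mem_product, Finset.mem_filter, Finset.mem_univ, true_and] at hq ⊢
    exact hq.1
  · intro p _; rfl
  · intro q _; rfl

private lemma lt_pairs_card (r : ℕ) :
    (Finset.univ.filter (fun q : Fin r × Fin r => q.1 < q.2)).card = r.choose 2 := by
  have hswap : (Finset.univ.filter (fun q : Fin r × Fin r => q.1 < q.2)).card
      = (Finset.univ.filter (fun q : Fin r × Fin r => q.2 < q.1)).card := by
    apply Finset.card_nbij' Prod.swap Prod.swap <;> simp [Set.MapsTo, Set.LeftInvOn, Set.RightInvOn]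
  have hsplit : (Finset.univ.filter (fun q : Fin r × Fin r => q.1 < q.2)).card
      + (Finset.univ.filter (fun q : Fin r × Fin r => q.2 < q.1)).card
      = (Finset.univ.filter (fun q : Fin r × Fin r => q.1 ≠ q.2)).card := by
    rw [← Finset.card_union_of_disjoint (by
      simp only [Finset.disjoint_filter]
      intro q _ h1 h2
      exact absurd h1 (not_lt_of_gt h2)), ← Finset.filter_or]
    congr 1
    apply Finset.filter_congr
    intro q _
    exact lt_or_lt_iff_ne
  have hod : (Finset.univ.filter (fun q : Fin r × Fin r => q.1 ≠ q.2)).card = r * (r - 1) := by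
    have : (Finset.univ.filter (fun q : Fin r × Fin r => q.1 ≠ q.2))
        = (Finset.univ : Finset (Fin r)).offDiag := by
      ext q; simp [Finset.mem_offDiag]
    rw [this, Finset.offDiag_card]
    simp [Nat.mul_sub_one, Nat.mul_sub]
  have hc : r.choose 2 = r * (r - 1) / 2 := Nat.choose_two_right r
  omega

private lemma subtype_card (r : ℕ) (i j : Fin r) (hij : i ≠ j) :
    Fintype.card {x : Fin r // x ≠ i ∧ x ≠ j} = r - 2 := by
  rw [Fintype.card_subtype]
  have : (Finset.univ.filter (fun x : Fin r => x ≠ i ∧ x ≠ j))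
      = Finset.univ \ {i, j} := by
    ext x; simp [and_comm]
  rw [this, Finset.card_sdiff_of_subset (by simp)]
  rw [Finset.card_insert_of_notMem (by simpa using hij), Finset.card_singleton]
  simp

private lemma fiber_card_le (k r : ℕ) (i j : Fin r) (hij : i ≠ j) (a b : Fin k) :
    (Finset.univ.filter (fun f : Fin r → Fin k => f i = a ∧ f j = b)).card ≤ k ^ (r - 2) := by
  classical
  have hcard : Fintype.card ({x : Fin r // x ≠ i ∧ x ≠ j} → Fin k) = k ^ (r - 2) := by
    rw [Fintype.card_fun, subtype_card r i j hij, Fintype.card_fin]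
  calc (Finset.univ.filter (fun f : Fin r → Fin k => f i = a ∧ f j = b)).card
      ≤ (Finset.univ : Finset ({x : Fin r // x ≠ i ∧ x ≠ j} → Fin k)).card := by
        apply Finset.card_le_card_of_injOn (fun f x => f x.1) (fun _ _ => Finset.mem_univ _)
        intro f hf g hg h
        simp only [Finset.coe_filter, Set.mem_setOf_eq, Finset.mem_univ, true_and] at hf hg
        funext x
        by_cases hxi : x = i
        · rw [hxi, hf.1, hg.1]
        by_cases hxj : x = j
        · rw [hxj, hf.2, hg.2]
        · exact congrFun h ⟨x, hxi, hxj⟩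
    _ = k ^ (r - 2) := by rw [Finset.card_univ, hcard]

private lemma edge_card (k r : ℕ) (G : SimpleGraph (Fin r × Fin k)) [DecidableRel G.Adj]
    (hG : ∀ u v, G.Adj u v → u.1 ≠ v.1) :
    G.edgeFinset.card = (Finset.univ.filter
      (fun p : (Fin r × Fin k) × (Fin r × Fin k) => p.1.1 < p.2.1 ∧ G.Adj p.1 p.2)).card := by
  symm
  apply Finset.card_bij (fun p _ => s(p.1, p.2))
  · intro p hp
    simp only [Finset.mem_filter, Finset.mem_univ, true_and] at hp
    rw [SimpleGraph.mem_edgeFinset, SimpleGraph.mem_edgeSet]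
    exact hp.2
  · intro p hp q hq h
    simp only [Finset.mem_filter, Finset.mem_univ, true_and] at hp hq
    rw [Sym2.eq_iff] at h
    rcases h with ⟨h1, h2⟩ | ⟨h1, h2⟩
    · exact Prod.ext h1 h2
    · exfalso
      have := hp.1
      rw [h1, h2] at this
      exact absurd hq.1 (not_lt_of_gt this)
  · intro e he
    rw [SimpleGraph.mem_edgeFinset] at he
    induction e with
    | _ u v =>
      rw [SimpleGraph.mem_edgeSet] at he
      rcases (hG u v he).lt_or_gt with h | h
      · exact ⟨(u, v), by simp [Finset.mem_filter, h, he], rfl⟩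
      · exact ⟨(v, u), by simp [Finset.mem_filter, h, he.symm], Sym2.eq_swap⟩

/-- Turán-type result: the maximum number of edges of a subgraph of the complete
`r`-partite graph `K_r(k)` (parts of size `k`) containing no copy of `K_r`
is exactly `(C(r,2) - 1) * k²`. -/
theorem stmt_0 (k r : ℕ) (hk : 1 ≤ k) (hr : 2 ≤ r) :
    IsGreatest {n : ℕ | ∃ G : SimpleGraph (Fin r × Fin k),
      (∀ u v, G.Adj u v → u.1 ≠ v.1) ∧
      (¬ ∃ f : Fin r → Fin k, ∀ i j : Fin r, i ≠ j → G.Adj (i, f i) (j, f j)) ∧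
      G.edgeSet.ncard = n} ((Nat.choose r 2 - 1) * k ^ 2) := by
  classical
  constructor
  · -- membership: explicit construction
    set i0 : Fin r := ⟨0, by omega⟩ with hi0
    set i1 : Fin r := ⟨1, by omega⟩ with hi1
    have h01 : i0 < i1 := by simp [hi0, hi1, Fin.lt_def]
    refine ⟨{ Adj := fun u v => u.1 ≠ v.1 ∧ ¬(u.1 = i0 ∧ v.1 = i1) ∧ ¬(u.1 = i1 ∧ v.1 = i0),
              symm := ?_, loopless := ?_ }, ?_, ?_, ?_⟩
    · constructor; intro u v ⟨h1, h2, h3⟩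
      exact ⟨h1.symm, fun h => h3 ⟨h.2, h.1⟩, fun h => h2 ⟨h.2, h.1⟩⟩
    · constructor; intro u h
      exact h.1 rfl
    · intro u v h
      exact h.1
    · rintro ⟨f, hf⟩
      have := hf i0 i1 (ne_of_lt h01)
      exact this.2.1 ⟨rfl, rfl⟩
    · -- edge count
      set G : SimpleGraph (Fin r × Fin k) :=
        { Adj := fun u v => u.1 ≠ v.1 ∧ ¬(u.1 = i0 ∧ v.1 = i1) ∧ ¬(u.1 = i1 ∧ v.1 = i0),
          symm := by
            constructor; intro u v ⟨h1, h2, h3⟩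
            exact ⟨h1.symm, fun h => h3 ⟨h.2, h.1⟩, fun h => h2 ⟨h.2, h.1⟩⟩,
          loopless := by constructor; intro u h; exact h.1 rfl } with hG
      show G.edgeSet.ncard = _
      have hnc : G.edgeSet.ncard = G.edgeFinset.card := by
        rw [SimpleGraph.edgeFinset]
        exact Set.ncard_eq_toFinset_card' _
      rw [hnc, edge_card k r G (fun u v h => h.1)]
      have hfe : (Finset.univ.filter
          (fun p : (Fin r × Fin k) × (Fin r × Fin k) => p.1.1 < p.2.1 ∧ G.Adj p.1 p.2))
          = (Finset.univ.filter
          (fun p : (Fin r × Fin k) × (Fin r × Fin k) =>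
            p.1.1 < p.2.1 ∧ ¬(p.1.1 = i0 ∧ p.2.1 = i1))) := by
        apply Finset.filter_congr
        intro p _
        constructor
        · rintro ⟨hlt, _, hbad, _⟩; exact ⟨hlt, hbad⟩
        · rintro ⟨hlt, hbad⟩
          refine ⟨hlt, ne_of_lt hlt, hbad, ?_⟩
          rintro ⟨hp1, hp2⟩
          rw [hp1, hp2] at hlt
          exact absurd h01 (not_lt_of_gt hlt)
      rw [hfe, card_pairs_cond k r (fun i j => i < j ∧ ¬(i = i0 ∧ j = i1))]
      congr 1
      have hsplit : (Finset.univ.filter (fun q : Fin r × Fin r =>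
            q.1 < q.2 ∧ ¬(q.1 = i0 ∧ q.2 = i1))).card
          + (Finset.univ.filter (fun q : Fin r × Fin r =>
            q.1 < q.2 ∧ (q.1 = i0 ∧ q.2 = i1))).card
          = (Finset.univ.filter (fun q : Fin r × Fin r => q.1 < q.2)).card := by
        rw [show (Finset.univ.filter (fun q : Fin r × Fin r =>
            q.1 < q.2 ∧ ¬(q.1 = i0 ∧ q.2 = i1)))
            = (Finset.univ.filter (fun q : Fin r × Fin r => q.1 < q.2)).filter
              (fun q => ¬(q.1 = i0 ∧ q.2 = i1)) by rw [Finset.filter_filter],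
          show (Finset.univ.filter (fun q : Fin r × Fin r =>
            q.1 < q.2 ∧ (q.1 = i0 ∧ q.2 = i1)))
            = (Finset.univ.filter (fun q : Fin r × Fin r => q.1 < q.2)).filter
              (fun q => (q.1 = i0 ∧ q.2 = i1)) by rw [Finset.filter_filter]]
        rw [add_comm]
        exact Finset.card_filter_add_card_filter_not _
      have hone : (Finset.univ.filter (fun q : Fin r × Fin r =>
          q.1 < q.2 ∧ (q.1 = i0 ∧ q.2 = i1))).card = 1 := by
        rw [show (Finset.univ.filter (fun q : Fin r × Fin r =>
            q.1 < q.2 ∧ (q.1 = i0 ∧ q.2 = i1))) = {(i0, i1)} by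
          ext q
          simp only [Finset.mem_filter, Finset.mem_univ, true_and, Finset.mem_singleton]
          constructor
          · rintro ⟨_, h1, h2⟩; exact Prod.ext h1 h2
          · rintro rfl; exact ⟨h01, rfl, rfl⟩]
        exact Finset.card_singleton _
      rw [lt_pairs_card] at hsplit
      omega
  · -- upper bound
    rintro n ⟨G, h1, h2, rfl⟩
    set N := Finset.univ.filter
      (fun p : (Fin r × Fin k) × (Fin r × Fin k) => p.1.1 < p.2.1 ∧ ¬ G.Adj p.1 p.2) with hNdef
    set A := Finset.univ.filter
      (fun p : (Fin r × Fin k) × (Fin r × Fin k) => p.1.1 < p.2.1 ∧ G.Adj p.1 p.2) with hAdef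
    have hAN : A.card + N.card = r.choose 2 * k ^ 2 := by
      rw [hAdef, hNdef,
        show (Finset.univ.filter (fun p : (Fin r × Fin k) × (Fin r × Fin k) =>
            p.1.1 < p.2.1 ∧ G.Adj p.1 p.2))
          = (Finset.univ.filter (fun p : (Fin r × Fin k) × (Fin r × Fin k) =>
            p.1.1 < p.2.1)).filter (fun p => G.Adj p.1 p.2) by rw [Finset.filter_filter],
        show (Finset.univ.filter (fun p : (Fin r × Fin k) × (Fin r × Fin k) =>
            p.1.1 < p.2.1 ∧ ¬ G.Adj p.1 p.2))
          = (Finset.univ.filter (fun p : (Fin r × Fin k) × (Fin r × Fin k) =>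
            p.1.1 < p.2.1)).filter (fun p => ¬ G.Adj p.1 p.2) by rw [Finset.filter_filter]]
      rw [Finset.card_filter_add_card_filter_not _]
      rw [card_pairs_cond k r (fun i j => i < j), lt_pairs_card]
    -- every transversal contains a missing pair
    have hw : ∀ f : Fin r → Fin k, ∃ p : (Fin r × Fin k) × (Fin r × Fin k),
        p ∈ N ∧ f p.1.1 = p.1.2 ∧ f p.2.1 = p.2.2 := by
      intro f
      push_neg at h2
      obtain ⟨i, j, hij, hnadj⟩ := h2 f
      rcases hij.lt_or_gt with h | h
      · exact ⟨((i, f i), (j, f j)), by simp [hNdef, h, hnadj], rfl, rfl⟩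
      · refine ⟨((j, f j), (i, f i)), ?_, rfl, rfl⟩
        simp only [hNdef, Finset.mem_filter, Finset.mem_univ, true_and]
        exact ⟨h, fun hadj => hnadj hadj.symm⟩
    choose w hw1 hw2 hw3 using hw
    have hcount : (Finset.univ : Finset (Fin r → Fin k)).card ≤ k ^ (r - 2) * N.card :=
      Finset.card_le_mul_card_image_of_maps_to (fun f _ => hw1 f) _ (by
        intro p hp
        have hne : p.1.1 ≠ p.2.1 := by
          rw [hNdef] at hp
          simp only [Finset.mem_filter] at hp
          exact ne_of_lt hp.2.1
        calc (Finset.univ.filter (fun f : Fin r → Fin k => w f = p)).card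
            ≤ (Finset.univ.filter
              (fun f : Fin r → Fin k => f p.1.1 = p.1.2 ∧ f p.2.1 = p.2.2)).card := by
              apply Finset.card_le_card
              intro f hf
              simp only [Finset.mem_filter, Finset.mem_univ, true_and] at hf ⊢
              rw [← hf]
              exact ⟨hw2 f, hw3 f⟩
          _ ≤ k ^ (r - 2) := fiber_card_le k r _ _ hne _ _)
    have hcu : (Finset.univ : Finset (Fin r → Fin k)).card = k ^ r := by
      rw [Finset.card_univ, Fintype.card_fun]
      simp
    have hNk : k ^ 2 ≤ N.card := by
      have hsplitpow : k ^ r = k ^ (r - 2) * k ^ 2 := by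
        rw [← pow_add]
        congr 1
        omega
      rw [hcu, hsplitpow] at hcount
      exact Nat.le_of_mul_le_mul_left hcount (Nat.pow_pos hk)
    have hnc : G.edgeSet.ncard = G.edgeFinset.card := by
      rw [SimpleGraph.edgeFinset]
      exact Set.ncard_eq_toFinset_card' _
    have hA : G.edgeSet.ncard = A.card := by
      rw [hnc, edge_card k r G h1, hAdef]
    have hch : 1 ≤ r.choose 2 := Nat.choose_pos hr
    have hgoal : (r.choose 2 - 1) * k ^ 2 = r.choose 2 * k ^ 2 - k ^ 2 := by
      rw [Nat.sub_mul, one_mul]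
    omega
end

section
/- If a subgraph G of the complete r-partite graph K_r(k) has the maximum number of edges subject to containing no K_r, then G contains K_r minus one edge as a subgraph. -/
lemma pair_eq_pair_aux {α : Type*} {a b c d : α} (h : ({a, b} : Set α) = {c, d}) :
    (a = c ∧ b = d) ∨ (a = d ∧ b = c) ∨ (a = b) := by
  have ha : a ∈ ({c, d} : Set α) := h ▸ (by simp)
  have hb : b ∈ ({c, d} : Set α) := h ▸ (by simp)
  have hc : c ∈ ({a, b} : Set α) := h.symm ▸ (by simp)
  have hd : d ∈ ({a, b} : Set α) := h.symm ▸ (by simp)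
  simp only [Set.mem_insert_iff, Set.mem_singleton_iff] at ha hb hc hd
  tauto

/-- An edge-maximum `K_r`-free subgraph of the complete `r`-partite graph `K_r(k)`
contains `K_r` minus one edge as a subgraph. -/
theorem stmt_1 (k r : ℕ) (hk : 1 ≤ k) (hr : 2 ≤ r)
    (G : SimpleGraph (Fin r × Fin k))
    (hpart : ∀ u v, G.Adj u v → u.1 ≠ v.1)
    (hKr : ¬ ∃ f : Fin r → Fin k, ∀ i j : Fin r, i ≠ j → G.Adj (i, f i) (j, f j))
    (hmax : ∀ G' : SimpleGraph (Fin r × Fin k),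
      (∀ u v, G'.Adj u v → u.1 ≠ v.1) →
      (¬ ∃ f : Fin r → Fin k, ∀ i j : Fin r, i ≠ j → G'.Adj (i, f i) (j, f j)) →
      G'.edgeSet.ncard ≤ G.edgeSet.ncard) :
    ∃ (f : Fin r → Fin k) (i₀ j₀ : Fin r), i₀ ≠ j₀ ∧
      ¬ G.Adj (i₀, f i₀) (j₀, f j₀) ∧
      ∀ i j : Fin r, i ≠ j → ¬(({i, j} : Set (Fin r)) = {i₀, j₀}) →
        G.Adj (i, f i) (j, f j) := by
  -- There is a missing cross edge, else G contains K_r.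
  have hne : ∃ u v : Fin r × Fin k, u.1 ≠ v.1 ∧ ¬ G.Adj u v := by
    by_contra h
    push_neg at h
    exact hKr ⟨fun _ => ⟨0, hk⟩, fun i j hij =>
      h (i, ⟨0, hk⟩) (j, ⟨0, hk⟩) (by simpa using hij)⟩
  obtain ⟨u, v, huv1, huv2⟩ := hne
  have hune : u ≠ v := fun h => huv1 (by rw [h])
  set G' : SimpleGraph (Fin r × Fin k) := G ⊔ SimpleGraph.fromEdgeSet {s(u, v)} with hG'
  have hadj' : ∀ a b, G'.Adj a b ↔ G.Adj a b ∨ (s(a, b) = s(u, v) ∧ a ≠ b) := by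
    intro a b
    simp [hG', SimpleGraph.fromEdgeSet_adj]
  have hpart' : ∀ a b, G'.Adj a b → a.1 ≠ b.1 := by
    intro a b hab
    rcases (hadj' a b).1 hab with h | ⟨h, _⟩
    · exact hpart a b h
    · rcases Sym2.eq_iff.mp h with ⟨ha, hb⟩ | ⟨ha, hb⟩ <;> subst ha <;> subst hb
      · exact huv1
      · exact huv1.symm
  -- G' has strictly more edges.
  have hmemG' : s(u, v) ∈ G'.edgeSet := by
    rw [SimpleGraph.mem_edgeSet, hadj']
    exact Or.inr ⟨rfl, hune⟩
  have hsub : G.edgeSet ⊂ G'.edgeSet := by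
    constructor
    · exact SimpleGraph.edgeSet_mono (le_sup_left)
    · intro h
      exact huv2 (h hmemG')
  have hcard : G.edgeSet.ncard < G'.edgeSet.ncard :=
    Set.ncard_lt_ncard hsub (Set.toFinite _)
  -- By maximality, G' contains a K_r.
  have hf : ∃ f : Fin r → Fin k, ∀ i j : Fin r, i ≠ j → G'.Adj (i, f i) (j, f j) := by
    by_contra h
    exact absurd (hmax G' hpart' h) (not_le.mpr hcard)
  obtain ⟨f, hf⟩ := hf
  -- This K_r must use the new edge.
  have claimA : ∀ i j : Fin r, i ≠ j → ¬(({i, j} : Set (Fin r)) = {u.1, v.1}) →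
      G.Adj (i, f i) (j, f j) := by
    intro i j hij hset
    rcases (hadj' _ _).1 (hf i j hij) with h | ⟨h, _⟩
    · exact h
    · exfalso
      rcases Sym2.eq_iff.mp h with ⟨ha, hb⟩ | ⟨ha, hb⟩
      · apply hset
        rw [← congrArg Prod.fst ha, ← congrArg Prod.fst hb]
      · apply hset
        rw [← congrArg Prod.fst ha, ← congrArg Prod.fst hb]
        exact Set.pair_comm _ _
  have claimB : ¬ G.Adj (u.1, f u.1) (v.1, f v.1) := by
    intro hadj
    apply hKr
    refine ⟨f, fun i j hij => ?_⟩
    by_cases hset : ({i, j} : Set (Fin r)) = {u.1, v.1}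
    · rcases pair_eq_pair_aux hset with ⟨h1, h2⟩ | ⟨h1, h2⟩ | h1
      · rw [h1, h2]; exact hadj
      · rw [h1, h2]; exact hadj.symm
      · exact absurd h1 hij
    · exact claimA i j hij hset
  exact ⟨f, u.1, v.1, huv1, claimB, claimA⟩
end

section
/- Let G be a spanning subgraph of a graph Γ on disjoint sets A, B, and suppose every pair (U,W) with U ⊆ A, W ⊆ B, |U| ≥ ε'|A|, |W| ≥ ε'|B| satisfies |d_{Γ,p}(U,W) − 1| ≤ δ. If (A,B) is (ε,p)-regular in G with ε ≥ ε', then (A,B) is (ε + 2δ, p)-regular in the complement graph Γ − G (restricted to the Γ-edges between A and B). -/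
/-- Number of edges of `G` between the finsets `A` and `B`. -/
noncomputable def crossEdges {V : Type*} (G : SimpleGraph V) (A B : Finset V) : ℕ :=
  {ab : V × V | ab.1 ∈ A ∧ ab.2 ∈ B ∧ G.Adj ab.1 ab.2}.ncard

/-- The `p`-density `d_{G,p}(A,B) = e_G(A,B)/(p|A||B|)`. -/
noncomputable def pdens {V : Type*} (G : SimpleGraph V) (p : ℝ) (A B : Finset V) : ℝ :=
  (crossEdges G A B : ℝ) / (p * A.card * B.card)

/-- If every `ε'`-large pair of subsets of `(A,B)` has `Γ`-density within `δ` of `1`,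
and `(A,B)` is `(ε,p)`-regular in `G ≤ Γ` with `ε ≥ ε'`, then `(A,B)` is
`(ε+2δ,p)`-regular in the complement `Γ - G` (whose density is
`d_{Γ,p} - d_{G,p}`). -/
theorem stmt_11 {V : Type*} (G Γ : SimpleGraph V) (hsub : G ≤ Γ) (p ε ε' δ : ℝ)
    (hδ : 0 ≤ δ) (hε'0 : 0 ≤ ε') (hε'1 : ε' ≤ 1) (hε' : ε' ≤ ε)
    (A B : Finset V)
    (hΓ : ∀ U ⊆ A, ∀ W ⊆ B, ε' * A.card ≤ (U.card : ℝ) → ε' * B.card ≤ (W.card : ℝ) →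
      |pdens Γ p U W - 1| ≤ δ)
    (hreg : ∀ U ⊆ A, ∀ W ⊆ B, ε * A.card ≤ (U.card : ℝ) → ε * B.card ≤ (W.card : ℝ) →
      |pdens G p A B - pdens G p U W| ≤ ε) :
    ∀ U ⊆ A, ∀ W ⊆ B,
      (ε + 2 * δ) * A.card ≤ (U.card : ℝ) → (ε + 2 * δ) * B.card ≤ (W.card : ℝ) →
      |(pdens Γ p A B - pdens G p A B) - (pdens Γ p U W - pdens G p U W)| ≤ ε + 2 * δ := by
  intro U hU W hW hUc hWc
  have hA : (0:ℝ) ≤ A.card := Nat.cast_nonneg _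
  have hB : (0:ℝ) ≤ B.card := Nat.cast_nonneg _
  have hεU : ε * A.card ≤ (U.card : ℝ) :=
    le_trans (by nlinarith) hUc
  have hεW : ε * B.card ≤ (W.card : ℝ) :=
    le_trans (by nlinarith) hWc
  have hε'U : ε' * A.card ≤ (U.card : ℝ) :=
    le_trans (by nlinarith) hUc
  have hε'W : ε' * B.card ≤ (W.card : ℝ) :=
    le_trans (by nlinarith) hWc
  have h1 := hΓ A (le_refl A) B (le_refl B) (by nlinarith) (by nlinarith)
  have h2 := hΓ U hU W hW hε'U hε'W
  have h3 := hreg U hU W hW hεU hεW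
  have := abs_sub_abs_le_abs_sub (pdens Γ p A B - 1) (pdens Γ p U W - 1)
  rw [abs_sub_comm] at h1 h2
  calc |(pdens Γ p A B - pdens G p A B) - (pdens Γ p U W - pdens G p U W)|
      ≤ |pdens G p A B - pdens G p U W| + (|1 - pdens Γ p A B| + |1 - pdens Γ p U W|) := by
        have := abs_sub (1 - pdens Γ p A B) (1 - pdens Γ p U W)
        have h4 : (pdens Γ p A B - pdens G p A B) - (pdens Γ p U W - pdens G p U W)
            = -(pdens G p A B - pdens G p U W) + -(((1 - pdens Γ p A B) - (1 - pdens Γ p U W))) := by ring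
        rw [h4]
        refine le_trans (abs_add_le _ _) ?_
        rw [abs_neg, abs_neg]
        exact add_le_add le_rfl (abs_sub _ _)
    _ ≤ ε + 2 * δ := by linarith
end

section
/- Let ε > 0, r ≥ 2, t ≥ 1, and let F be a graph on the vertex set [r] × [t] in which edges only join vertices with distinct first coordinates (i.e., F ⊆ K_r(t)). If F has more than (C(r,2) − 1)·t² edges, then F contains a copy of K_r with one vertex in each of the r coordinate classes. In particular, if at most ε·t² of the C(r,2)·t² cross pairs are missing from K_r(t) and ε < 1, then the resulting graph contains such a K_r. -/
open Finset

private lemma aux_count {r t : ℕ} (a b : Fin r) (hab : a ≠ b) (x y : Fin t) :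
    (Finset.univ.filter fun f : Fin r → Fin t => f a = x ∧ f b = y).card = t ^ (r - 2) := by
  classical
  rw [← Fintype.card_subtype]
  have e : {f : Fin r → Fin t // f a = x ∧ f b = y} ≃ ({i : Fin r // i ≠ a ∧ i ≠ b} → Fin t) :=
  { toFun := fun f i => f.1 i.1
    invFun := fun g => ⟨fun i => if h : i = a then x else if h' : i = b then y else g ⟨i, h, h'⟩,
      by simp [hab.symm, dif_neg]⟩
    left_inv := by
      rintro ⟨f, hfa, hfb⟩
      ext i
      by_cases h : i = a
      · subst h; simp [hfa]
      · by_cases h' : i = b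
        · subst h'; simp [h, hfb]
        · simp [h, h']
    right_inv := by
      intro g
      funext i
      obtain ⟨i, h1, h2⟩ := i
      simp [h1, h2] }
  rw [Fintype.card_congr e, Fintype.card_fun, Fintype.card_fin]
  congr 1
  rw [Fintype.card_subtype]
  have : (univ.filter fun i : Fin r => i ≠ a ∧ i ≠ b) = univ \ {a, b} := by
    ext i; simp [not_or]
  rw [this, Finset.card_sdiff_of_subset (by simp), Finset.card_univ, Fintype.card_fin,
    Finset.card_insert_of_notMem (by simp [hab]), Finset.card_singleton]

private lemma core {r t : ℕ} (hr : 2 ≤ r) (ht : 1 ≤ t) (F : SimpleGraph (Fin r × Fin t))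
    (hF : ∀ u v, F.Adj u v → u.1 ≠ v.1)
    (hB : ((SimpleGraph.fromRel (fun u v : Fin r × Fin t => u.1 ≠ v.1)).edgeSet \
        F.edgeSet).ncard < t ^ 2) :
    ∃ f : Fin r → Fin t, ∀ i j : Fin r, i ≠ j → F.Adj (i, f i) (j, f j) := by
  classical
  set K := SimpleGraph.fromRel (fun u v : Fin r × Fin t => u.1 ≠ v.1) with hK
  set B : Finset (Sym2 (Fin r × Fin t)) := (K.edgeSet \ F.edgeSet).toFinset with hBdef
  have hBcard : B.card < t ^ 2 := by
    rwa [hBdef, ← Set.ncard_eq_toFinset_card']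
  -- double counting
  have key : ∑ f : Fin r → Fin t, (B.filter (fun e => ∀ u ∈ e, f u.1 = u.2)).card
      = B.card * t ^ (r - 2) := by
    simp_rw [Finset.card_filter]
    rw [Finset.sum_comm]
    rw [← Finset.sum_attach B (fun e => ∑ f : Fin r → Fin t, if ∀ u ∈ e, f u.1 = u.2 then 1 else 0)]
    have : ∀ e : B, (∑ f : Fin r → Fin t, if ∀ u ∈ (e : Sym2 (Fin r × Fin t)), f u.1 = u.2 then 1 else 0) = t ^ (r - 2) := by
      rintro ⟨e, he⟩
      have heK : e ∈ K.edgeSet := by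
        rw [hBdef, Set.mem_toFinset] at he; exact he.1
      induction e using Sym2.inductionOn with
      | hf u v =>
        have huv : u.1 ≠ v.1 := by
          rw [SimpleGraph.mem_edgeSet, hK, SimpleGraph.fromRel_adj] at heK
          rcases heK.2 with h | h
          · exact h
          · exact h.symm
        rw [← Finset.card_filter]
        have : (univ.filter fun f : Fin r → Fin t => ∀ u' ∈ s(u, v), f u'.1 = u'.2)
            = univ.filter fun f : Fin r → Fin t => f u.1 = u.2 ∧ f v.1 = v.2 := by
          apply Finset.filter_congr
          intro f _
          constructor
          · intro h; exact ⟨h u (Sym2.mem_mk_left u v), h v (Sym2.mem_mk_right u v)⟩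
          · rintro ⟨h1, h2⟩ w hw; rcases Sym2.mem_iff.mp hw with rfl | rfl <;> assumption
        rw [this, aux_count u.1 v.1 huv u.2 v.2]
    rw [Finset.sum_congr rfl (fun e _ => this e), Finset.sum_const, Finset.card_attach, smul_eq_mul]
  -- find a good f
  have hlt : ∑ f : Fin r → Fin t, (B.filter (fun e => ∀ u ∈ e, f u.1 = u.2)).card
      < t ^ r := by
    rw [key]
    calc B.card * t ^ (r - 2) < t ^ 2 * t ^ (r - 2) := by
          exact (Nat.mul_lt_mul_right (Nat.pow_pos (n := r - 2) ht)).mpr hBcard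
      _ = t ^ r := by rw [← pow_add, Nat.add_sub_cancel' hr]
  have : ∃ f : Fin r → Fin t, (B.filter (fun e => ∀ u ∈ e, f u.1 = u.2)).card = 0 := by
    by_contra h
    push_neg at h
    have : t ^ r ≤ ∑ f : Fin r → Fin t, (B.filter (fun e => ∀ u ∈ e, f u.1 = u.2)).card := by
      calc t ^ r = ∑ _f : Fin r → Fin t, 1 := by
            rw [Finset.sum_const, Finset.card_univ, Fintype.card_fun, Fintype.card_fin,
              Fintype.card_fin, smul_eq_mul, mul_one]
        _ ≤ _ := Finset.sum_le_sum (fun f _ => Nat.one_le_iff_ne_zero.mpr (h f))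
    exact absurd hlt (not_lt.mpr this)
  obtain ⟨f, hf0⟩ := this
  rw [Finset.card_eq_zero, Finset.filter_eq_empty_iff] at hf0
  refine ⟨f, fun i j hij => ?_⟩
  rw [← SimpleGraph.mem_edgeSet]
  by_contra hne
  have hmemK : s((i, f i), (j, f j)) ∈ K.edgeSet := by
    rw [SimpleGraph.mem_edgeSet, hK, SimpleGraph.fromRel_adj]
    exact ⟨by simp [hij], Or.inl hij⟩
  have hmemB : s((i, f i), (j, f j)) ∈ B := by
    rw [hBdef, Set.mem_toFinset]; exact ⟨hmemK, hne⟩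
  exact hf0 hmemB (by rintro w hw; rcases Sym2.mem_iff.mp hw with rfl | rfl <;> rfl)

private lemma Kcount (r t : ℕ) (hr : 2 ≤ r) :
    (SimpleGraph.fromRel (fun u v : Fin r × Fin t => u.1 ≠ v.1)).edgeSet.ncard
      = Nat.choose r 2 * t ^ 2 := by
  classical
  set K := SimpleGraph.fromRel (fun u v : Fin r × Fin t => u.1 ≠ v.1) with hK
  have hadj : ∀ u v : Fin r × Fin t, K.Adj u v ↔ u.1 ≠ v.1 := by
    intro u v
    rw [hK, SimpleGraph.fromRel_adj]
    constructor
    · rintro ⟨h1, h2 | h2⟩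
      · exact h2
      · exact h2.symm
    · intro h
      exact ⟨fun hh => h (by rw [hh]), Or.inl h⟩
  have h1 : K.edgeSet.ncard = K.edgeFinset.card := by
    rw [SimpleGraph.edgeFinset, ← Set.ncard_eq_toFinset_card']
  have h2 : 2 * K.edgeFinset.card
      = (univ.filter fun (p : (Fin r × Fin t) × (Fin r × Fin t)) => K.Adj p.1 p.2).card :=
    SimpleGraph.two_mul_card_edgeFinset K
  have h3 : (univ.filter fun (p : (Fin r × Fin t) × (Fin r × Fin t)) => K.Adj p.1 p.2).card
      = ((univ : Finset (Fin r)).offDiag ×ˢ (univ : Finset (Fin t × Fin t))).card := by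
    apply Finset.card_nbij' (fun p => ((p.1.1, p.2.1), (p.1.2, p.2.2)))
      (fun q => ((q.1.1, q.2.1), (q.1.2, q.2.2)))
    · intro p hp
      simp only [Finset.mem_coe, Finset.mem_filter, Finset.mem_univ, true_and, hadj] at hp
      simp [Finset.mem_offDiag, hp]
    · intro q hq
      simp only [Finset.mem_coe, Finset.mem_product, Finset.mem_offDiag] at hq
      simp [hadj, hq.1.2.2]
    · intro p _; rfl
    · intro q _; rfl
  have h4 : ((univ : Finset (Fin r)).offDiag ×ˢ (univ : Finset (Fin t × Fin t))).card
      = (r * r - r) * t ^ 2 := by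
    rw [Finset.card_product, Finset.offDiag_card]
    simp [Fintype.card_fin, sq]
  have h5 : 2 * (Nat.choose r 2 * t ^ 2) = (r * r - r) * t ^ 2 := by
    have : 2 * Nat.choose r 2 = r * r - r := by
      rw [Nat.choose_two_right]
      have hev : 2 ∣ r * (r - 1) := (Nat.even_mul_pred_self r).two_dvd
      rw [Nat.mul_div_cancel' hev]
      cases r with
      | zero => rfl
      | succ n => rw [← Nat.mul_sub_one, Nat.add_sub_cancel, Nat.mul_comm]
    rw [← mul_assoc, this]
  omega

/-- A subgraph of the complete `r`-partite graph `K_r(t)` with more than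
`(C(r,2)-1)·t²` edges contains a copy of `K_r` (one vertex per part).
In particular, if at most `ε·t² (ε < 1)` of the cross pairs of `K_r(t)` are
missing, the resulting graph contains such a `K_r`. -/
theorem stmt_13 (r t : ℕ) (hr : 2 ≤ r) (ht : 1 ≤ t) (ε : ℝ) (hε0 : 0 ≤ ε) (hε1 : ε < 1) :
    (∀ F : SimpleGraph (Fin r × Fin t), (∀ u v, F.Adj u v → u.1 ≠ v.1) →
      (Nat.choose r 2 - 1) * t ^ 2 < F.edgeSet.ncard →
      ∃ f : Fin r → Fin t, ∀ i j : Fin r, i ≠ j → F.Adj (i, f i) (j, f j)) ∧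
    (∀ F : SimpleGraph (Fin r × Fin t), (∀ u v, F.Adj u v → u.1 ≠ v.1) →
      ((((SimpleGraph.fromRel (fun u v : Fin r × Fin t => u.1 ≠ v.1)).edgeSet \
          F.edgeSet).ncard : ℝ) ≤ ε * t ^ 2) →
      ∃ f : Fin r → Fin t, ∀ i j : Fin r, i ≠ j → F.Adj (i, f i) (j, f j)) := by
  classical
  set K := SimpleGraph.fromRel (fun u v : Fin r × Fin t => u.1 ≠ v.1) with hK
  constructor
  · intro F hF hcard
    apply core hr ht F hF
    have hle : F ≤ K := by
      intro u v huv
      rw [hK, SimpleGraph.fromRel_adj]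
      exact ⟨F.ne_of_adj huv, Or.inl (hF u v huv)⟩
    have hsub : F.edgeSet ⊆ K.edgeSet := SimpleGraph.edgeSet_mono hle
    have hpart : (K.edgeSet \ F.edgeSet).ncard + F.edgeSet.ncard = Nat.choose r 2 * t ^ 2 := by
      rw [Set.ncard_diff_add_ncard_of_subset hsub (Set.toFinite _), Kcount r t hr]
    have hc : 1 ≤ Nat.choose r 2 := Nat.choose_pos hr
    have h1 : (Nat.choose r 2 - 1) * t ^ 2 + t ^ 2 = Nat.choose r 2 * t ^ 2 := by
      rw [Nat.sub_one_mul, Nat.sub_add_cancel (Nat.le_mul_of_pos_left _ hc)]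
    have h2 : (K.edgeSet \ F.edgeSet).ncard + F.edgeSet.ncard < F.edgeSet.ncard + t ^ 2 := by
      rw [hpart, ← h1]
      exact Nat.add_lt_add_right hcard _
    rw [Nat.add_comm F.edgeSet.ncard (t ^ 2)] at h2
    exact Nat.lt_of_add_lt_add_right h2
  · intro F hF hmiss
    apply core hr ht F hF
    have ht2 : (0 : ℝ) < (t : ℝ) ^ 2 := by positivity
    have : (((K.edgeSet \ F.edgeSet).ncard : ℝ)) < ((t ^ 2 : ℕ) : ℝ) := by
      push_cast
      calc ((K.edgeSet \ F.edgeSet).ncard : ℝ) ≤ ε * (t : ℝ) ^ 2 := hmiss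
        _ < 1 * (t : ℝ) ^ 2 := by exact (mul_lt_mul_of_pos_right hε1 ht2)
        _ = (t : ℝ) ^ 2 := one_mul _
    exact_mod_cast this
end
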